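/- Scaling and squaring enclosure theorem: let [A] be an interval matrix and K, L ∈ ℕ with (K+2)·2^L > ‖[A]‖. Then for every A ∈ [A], exp(A) belongs to [S]([A],L,K) := ([H]([A]/2^L, K))^{2^L}, where [H] is the Horner interval enclosure of the exponential with remainder, and the power 2^L is computed by L successive interval matrix squarings. -/

import Mathlib

open Pointwise

attribute [local instance] Matrix.linftyOpNormedRing Matrix.linftyOpNormedAlgebra

/-- The matrix exponential, defined by its power series. -/
noncomputable def expM {n : ℕ} (A : Matrix (Fin n) (Fin n) ℝ) : Matrix (Fin n) (Fin n) ℝ :=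
  ∑' k : ℕ, (k.factorial : ℝ)⁻¹ • A ^ k

/-- The truncation error bound `ρ(α,K) = α^(K+1) / ((K+1)!·(1 − α/(K+2)))`. -/
noncomputable def rho (α : ℝ) (K : ℕ) : ℝ :=
  α ^ (K + 1) / ((K + 1).factorial * (1 - α / (K + 2)))

/-- An interval matrix, given entrywise by subsets (intervals) of `ℝ`. -/
abbrev IMat (n : ℕ) := Matrix (Fin n) (Fin n) (Set ℝ)

/-- The interval matrix `[A̲, Ā]` with entries `[a̲_{ij}, ā_{ij}]`. -/
def ofBounds {n : ℕ} (lo hi : Matrix (Fin n) (Fin n) ℝ) : IMat n :=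
  fun i j => Set.Icc (lo i j) (hi i j)

/-- Membership of a real matrix in an interval matrix (entrywise membership). -/
def memI {n : ℕ} (M : Matrix (Fin n) (Fin n) ℝ) (A : IMat n) : Prop :=
  ∀ i j, M i j ∈ A i j

/-- Entrywise interval matrix addition (setwise interval addition). -/
def iadd {n : ℕ} (A B : IMat n) : IMat n := fun i j => A i j + B i j

/-- Scalar multiple of an interval matrix (setwise). -/
def ismul {n : ℕ} (c : ℝ) (A : IMat n) : IMat n := fun i j => c • A i j

/-- Interval matrix product: `([A][B])_{ij} = ∑ₖ [a_{ik}]·[b_{kj}]`, where interval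
products are setwise and sums are Minkowski sums (interval arithmetic). -/
def imul {n : ℕ} (A B : IMat n) : IMat n :=
  fun i j => ∑ k : Fin n, Set.image2 (· * ·) (A i k) (B k j)

/-- The degenerate (point) interval identity matrix. -/
def iId (n : ℕ) : IMat n := fun i j => {(1 : Matrix (Fin n) (Fin n) ℝ) i j}

/-- Interval Horner scheme: `ihornerP [A] K K` is the interval evaluation of
`I + [A](I + ([A]/2)(I + ([A]/3)(⋯(I + [A]/K)⋯))))`. -/
def ihornerP {n : ℕ} (A : IMat n) (K : ℕ) : ℕ → IMat n
  | 0 => iId n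
  | m + 1 => iadd (iId n) (ismul ((K - m : ℕ) : ℝ)⁻¹ (imul A (ihornerP A K m)))

/-- The norm of an interval matrix: `‖[A]‖ = sup{‖A‖_∞ : A ∈ [A]}`. -/
noncomputable def intervalNorm {n : ℕ} (lo hi : Matrix (Fin n) (Fin n) ℝ) : ℝ :=
  sSup ((fun M => ‖M‖) '' {A : Matrix (Fin n) (Fin n) ℝ | ∀ i j, A i j ∈ Set.Icc (lo i j) (hi i j)})

/-- The Horner enclosure with remainder, `[H]([B],K)`, for `[B] = [B̲, B̄]`. -/
noncomputable def ihorner {n : ℕ} (Blo Bhi : Matrix (Fin n) (Fin n) ℝ) (K : ℕ) : IMat n :=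
  iadd (ihornerP (ofBounds Blo Bhi) K K)
    (fun _ _ => rho (intervalNorm Blo Bhi) K • Set.Icc (-1 : ℝ) 1)

----------------- AUX -------------------
section Aux
variable {n : ℕ}

lemma mem_imul {M N : Matrix (Fin n) (Fin n) ℝ} {S T : IMat n}
    (hM : memI M S) (hN : memI N T) : memI (M * N) (imul S T) := by
  intro i j
  show (M * N) i j ∈ ∑ k : Fin n, Set.image2 (· * ·) (S i k) (T k j)
  rw [Set.mem_fintype_sum]
  exact ⟨fun k => M i k * N k j,
    fun k => Set.mem_image2_of_mem (hM i k) (hN k j), (Matrix.mul_apply).symm⟩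

lemma mem_iter_sq (L : ℕ) : ∀ {M : Matrix (Fin n) (Fin n) ℝ} {S : IMat n},
    memI M S → memI (M ^ (2 ^ L)) ((fun T => imul T T)^[L] S) := by
  induction L with
  | zero => intro M S h; simpa using h
  | succ L ih =>
    intro M S h
    rw [Function.iterate_succ_apply]
    have h2 := ih (mem_imul h h)
    have hpow : (M * M) ^ (2 ^ L) = M ^ (2 ^ (L + 1)) := by
      rw [← sq, ← pow_mul, pow_succ, mul_comm]
    rwa [hpow] at h2

/-- Pointwise Horner scheme. -/
noncomputable def hornerP (B : Matrix (Fin n) (Fin n) ℝ) (K : ℕ) :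
    ℕ → Matrix (Fin n) (Fin n) ℝ
  | 0 => 1
  | m + 1 => 1 + ((K - m : ℕ) : ℝ)⁻¹ • (B * hornerP B K m)

lemma mem_ihornerP {B : Matrix (Fin n) (Fin n) ℝ} {S : IMat n} (hB : memI B S) (K : ℕ) :
    ∀ m, memI (hornerP B K m) (ihornerP S K m) := by
  intro m
  induction m with
  | zero => intro i j; exact Set.mem_singleton _
  | succ m ih =>
    intro i j
    have h1 := mem_imul hB ih
    show (1 + ((K - m : ℕ) : ℝ)⁻¹ • (B * hornerP B K m)) i j ∈
      {(1 : Matrix (Fin n) (Fin n) ℝ) i j} +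
        ((K - m : ℕ) : ℝ)⁻¹ • (imul S (ihornerP S K m)) i j
    rw [Matrix.add_apply, Matrix.smul_apply]
    exact Set.add_mem_add rfl (Set.smul_mem_smul_set (h1 i j))

lemma hornerP_eq (B : Matrix (Fin n) (Fin n) ℝ) (K : ℕ) :
    ∀ m, m ≤ K → hornerP B K m =
      ∑ j ∈ Finset.range (m + 1),
        (((K - m).factorial : ℝ) / ((K - m + j).factorial : ℝ)) • B ^ j := by
  intro m
  induction m with
  | zero =>
    intro _
    have : ((K.factorial : ℝ)) ≠ 0 := Nat.cast_ne_zero.mpr (Nat.factorial_ne_zero K)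
    simp [hornerP, div_self this]
  | succ m ih =>
    intro hm
    have hmK : m ≤ K := le_of_lt hm
    have hd : 1 ≤ K - m := by omega
    set d := K - m with hdd
    have hKm1 : K - (m + 1) = d - 1 := by omega
    have hdpos : (0 : ℝ) < (d : ℝ) := by exact_mod_cast hd
    rw [hornerP, ih hmK, Finset.mul_sum, Finset.smul_sum]
    rw [Finset.sum_range_succ' _ (m + 1)]
    have hcoef : ∀ j, ((K - m : ℕ) : ℝ)⁻¹ •
        ((((d).factorial : ℝ) / (((d + j)).factorial : ℝ)) • (B * B ^ j))
        = (((K - (m+1)).factorial : ℝ) / ((K - (m+1) + (j+1)).factorial : ℝ)) • B ^ (j + 1) := by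
      intro j
      rw [hKm1, ← hdd, smul_smul, ← pow_succ']
      congr 1
      have h1 : d - 1 + (j + 1) = d + j := by omega
      rw [h1]
      have h2 : d.factorial = d * (d-1).factorial := by
        conv_lhs => rw [show d = (d-1) + 1 by omega]
        rw [Nat.factorial_succ]
        congr 1
        omega
      rw [h2]
      push_cast
      field_simp
    have hzero : (((K - (m+1)).factorial : ℝ) / ((K - (m+1) + 0).factorial : ℝ)) • B ^ 0
        = (1 : Matrix (Fin n) (Fin n) ℝ) := by
      have h0 : (((K - (m+1)).factorial : ℝ)) ≠ 0 :=
        Nat.cast_ne_zero.mpr (Nat.factorial_ne_zero _)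
      rw [add_zero, div_self h0, one_smul, pow_zero]
    rw [hzero]
    rw [add_comm]
    congr 1
    apply Finset.sum_congr rfl
    intro j _
    rw [mul_smul_comm]
    exact hcoef j

lemma hornerP_eq_partial (B : Matrix (Fin n) (Fin n) ℝ) (K : ℕ) :
    hornerP B K K = ∑ j ∈ Finset.range (K + 1), ((j.factorial : ℝ))⁻¹ • B ^ j := by
  rw [hornerP_eq B K K le_rfl]
  apply Finset.sum_congr rfl
  intro j _
  congr 1
  rw [Nat.sub_self, zero_add, Nat.factorial_zero, Nat.cast_one, one_div]

end Aux

section Aux2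
variable {n : ℕ}

lemma expM_eq_exp (M : Matrix (Fin n) (Fin n) ℝ) : expM M = NormedSpace.exp M := by
  rw [NormedSpace.exp_eq_tsum ℝ]; rfl

lemma entry_abs_le (M : Matrix (Fin n) (Fin n) ℝ) (i j : Fin n) : |M i j| ≤ ‖M‖ := by
  have h1 : ‖M i j‖₊ ≤ ‖M‖₊ := by
    rw [Matrix.linfty_opNNNorm_def]
    exact le_trans (Finset.single_le_sum (f := fun k => ‖M i k‖₊)
      (fun _ _ => zero_le') (Finset.mem_univ j)) (Finset.le_sup (f := fun i => ∑ j : Fin n, ‖M i j‖₊) (Finset.mem_univ i))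
  rw [← Real.norm_eq_abs, ← coe_nnnorm, ← coe_nnnorm M]
  exact_mod_cast h1

lemma norm_le_of_entry_abs_le {M N : Matrix (Fin n) (Fin n) ℝ}
    (h : ∀ i j, |M i j| ≤ |N i j|) : ‖M‖ ≤ ‖N‖ := by
  have h1 : ‖M‖₊ ≤ ‖N‖₊ := by
    rw [Matrix.linfty_opNNNorm_def, Matrix.linfty_opNNNorm_def]
    apply Finset.sup_mono_fun
    intro i _
    apply Finset.sum_le_sum
    intro j _
    have hj := h i j
    rw [← Real.norm_eq_abs, ← Real.norm_eq_abs, ← coe_nnnorm, ← coe_nnnorm,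
      NNReal.coe_le_coe] at hj
    exact hj
  rw [← coe_nnnorm, ← coe_nnnorm]
  exact_mod_cast h1

lemma intervalNorm_bdd (lo hi : Matrix (Fin n) (Fin n) ℝ) :
    BddAbove ((fun M => ‖M‖) ''
      {A : Matrix (Fin n) (Fin n) ℝ | ∀ i j, A i j ∈ Set.Icc (lo i j) (hi i j)}) := by
  refine ⟨‖Matrix.of (fun i j => |lo i j| + |hi i j|)‖, ?_⟩
  rintro x ⟨M, hM, rfl⟩
  apply norm_le_of_entry_abs_le
  intro i j
  have h1 := (hM i j).1
  have h2 := (hM i j).2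
  have habs : |M i j| ≤ |lo i j| + |hi i j| :=
    (abs_le_max_abs_abs h1 h2).trans (max_le (le_add_of_nonneg_right (abs_nonneg _))
      (le_add_of_nonneg_left (abs_nonneg _)))
  have : |(Matrix.of (fun i j => |lo i j| + |hi i j|)) i j| = |lo i j| + |hi i j| := by
    rw [Matrix.of_apply, abs_of_nonneg (by positivity)]
  rw [this]
  exact habs

lemma norm_le_intervalNorm {lo hi M : Matrix (Fin n) (Fin n) ℝ}
    (hM : ∀ i j, M i j ∈ Set.Icc (lo i j) (hi i j)) : ‖M‖ ≤ intervalNorm lo hi :=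
  le_csSup (intervalNorm_bdd lo hi) ⟨M, hM, rfl⟩

lemma intervalNorm_nonneg {lo hi : Matrix (Fin n) (Fin n) ℝ}
    (h : ∀ i j, lo i j ≤ hi i j) : 0 ≤ intervalNorm lo hi :=
  (norm_nonneg lo).trans (norm_le_intervalNorm (fun i j => ⟨le_rfl, h i j⟩))

lemma one_sub_div_pos {α : ℝ} {K : ℕ} (h : α < (K : ℝ) + 2) :
    0 < 1 - α / ((K : ℝ) + 2) := by
  rw [sub_pos, div_lt_one (by positivity)]
  exact h

lemma rho_nonneg {α : ℝ} {K : ℕ} (h0 : 0 ≤ α) (h : α < (K : ℝ) + 2) : 0 ≤ rho α K := by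
  unfold rho
  have := one_sub_div_pos h
  positivity

lemma rho_mono {α β : ℝ} {K : ℕ} (h0 : 0 ≤ α) (hab : α ≤ β) (hb : β < (K : ℝ) + 2) :
    rho α K ≤ rho β K := by
  unfold rho
  have hb2 : 0 < 1 - β / ((K : ℝ) + 2) := one_sub_div_pos hb
  have hfac : (0 : ℝ) < ((K + 1).factorial : ℝ) := by positivity
  apply div_le_div₀ (pow_nonneg (h0.trans hab) _) (pow_le_pow_left₀ h0 hab _)
    (by positivity)
  apply mul_le_mul_of_nonneg_left _ hfac.le
  have : α / ((K : ℝ) + 2) ≤ β / ((K : ℝ) + 2) := by gcongr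
  linarith

set_option maxHeartbeats 1000000 in
lemma expM_sub_partial_norm_le {B : Matrix (Fin n) (Fin n) ℝ} {K : ℕ}
    (hK : ‖B‖ < (K : ℝ) + 2) :
    ‖expM B - ∑ j ∈ Finset.range (K + 1), ((j.factorial : ℝ))⁻¹ • B ^ j‖ ≤ rho ‖B‖ K := by
  set α := ‖B‖ with hα
  have hα0 : 0 ≤ α := norm_nonneg B
  have hsum : Summable (fun k : ℕ => ((k.factorial : ℝ))⁻¹ • B ^ k) :=
    NormedSpace.expSeries_summable' (𝕂 := ℝ) B
  have hsumn : Summable (fun k : ℕ => ‖((k.factorial : ℝ))⁻¹ • B ^ k‖) :=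
    NormedSpace.norm_expSeries_summable' (𝕂 := ℝ) B
  have hsumn' : Summable (fun k : ℕ => ‖(((k + (K+1)).factorial : ℝ))⁻¹ • B ^ (k + (K+1))‖) :=
    (summable_nat_add_iff (K+1)).mpr hsumn
  have hsplit := Summable.sum_add_tsum_nat_add (f := fun k : ℕ => ((k.factorial : ℝ))⁻¹ • B ^ k)
    (K + 1) hsum
  have heq : expM B - ∑ j ∈ Finset.range (K + 1), ((j.factorial : ℝ))⁻¹ • B ^ j
      = ∑' k : ℕ, (((k + (K+1)).factorial : ℝ))⁻¹ • B ^ (k + (K+1)) := by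
    rw [expM, ← hsplit]; abel
  rw [heq]
  set r := α / ((K : ℝ) + 2) with hr
  have hr0 : 0 ≤ r := by positivity
  have hr1 : r < 1 := (div_lt_one (by positivity)).mpr hK
  set c := α ^ (K + 1) / (((K + 1).factorial : ℝ)) with hc
  have hc0 : 0 ≤ c := by positivity
  have hterm : ∀ k : ℕ, ‖(((k + (K+1)).factorial : ℝ))⁻¹ • B ^ (k + (K+1))‖ ≤ c * r ^ k := by
    intro k
    rw [norm_smul, Real.norm_eq_abs, abs_of_nonneg (by positivity)]
    have h1 : ‖B ^ (k + (K+1))‖ ≤ α ^ (k + (K+1)) := norm_pow_le' B (by omega)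
    have hfact : ((K + 1).factorial : ℝ) * ((K : ℝ) + 2) ^ k ≤ ((k + (K+1)).factorial : ℝ) := by
      have h := Nat.factorial_mul_pow_le_factorial (m := K + 1) (n := k)
      have h2 : ((K + 1).factorial * (K + 1 + 1) ^ k : ℕ) ≤ ((k + (K + 1)).factorial : ℕ) := by
        rwa [add_comm k (K + 1)]
      calc ((K + 1).factorial : ℝ) * ((K : ℝ) + 2) ^ k
          = (((K + 1).factorial * (K + 1 + 1) ^ k : ℕ) : ℝ) := by push_cast; ring
        _ ≤ ((k + (K+1)).factorial : ℝ) := by exact_mod_cast h2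
    calc (((k + (K+1)).factorial : ℝ))⁻¹ * ‖B ^ (k + (K+1))‖
        ≤ (((k + (K+1)).factorial : ℝ))⁻¹ * α ^ (k + (K+1)) :=
          mul_le_mul_of_nonneg_left h1 (by positivity)
      _ = α ^ (k + (K+1)) / (((k + (K+1)).factorial : ℝ)) := by
          rw [inv_mul_eq_div]
      _ ≤ α ^ (k + (K+1)) / (((K + 1).factorial : ℝ) * ((K : ℝ) + 2) ^ k) := by
          apply div_le_div_of_nonneg_left (by positivity) (by positivity) hfact
      _ = c * r ^ k := by
          rw [hc, hr, div_pow, div_mul_div_comm, ← pow_add]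
          rw [add_comm (K + 1) k]
  calc ‖∑' k : ℕ, (((k + (K+1)).factorial : ℝ))⁻¹ • B ^ (k + (K+1))‖
      ≤ ∑' k : ℕ, ‖(((k + (K+1)).factorial : ℝ))⁻¹ • B ^ (k + (K+1))‖ :=
        norm_tsum_le_tsum_norm hsumn'
    _ ≤ ∑' k : ℕ, c * r ^ k :=
        Summable.tsum_le_tsum hterm hsumn' ((summable_geometric_of_lt_one hr0 hr1).mul_left c)
    _ = c * (1 - r)⁻¹ := by rw [tsum_mul_left, tsum_geometric_of_lt_one hr0 hr1]
    _ = rho α K := by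
        rw [rho, hc, div_eq_mul_inv, mul_assoc, ← mul_inv, ← div_eq_mul_inv]

lemma mem_smul_unit_Icc {r c : ℝ} (hc : 0 ≤ c) (h : |r| ≤ c) :
    r ∈ c • Set.Icc (-1 : ℝ) 1 := by
  rcases eq_or_lt_of_le hc with h0 | h0
  · have hr : r = 0 := abs_nonpos_iff.mp (h.trans h0.symm.le)
    rw [← h0, hr, Set.zero_smul_set ⟨1, by norm_num⟩]
    exact Set.mem_zero.mpr rfl
  · rw [LinearOrderedField.smul_Icc h0]
    simp only [smul_eq_mul, mul_neg_one, mul_one]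
    exact Set.mem_Icc.mpr (abs_le.mp h)

lemma mem_ihorner {lo hi B : Matrix (Fin n) (Fin n) ℝ} {K : ℕ}
    (hlohi : ∀ i j, lo i j ≤ hi i j)
    (hB : memI B (ofBounds lo hi)) (hK : intervalNorm lo hi < (K : ℝ) + 2) :
    memI (expM B) (ihorner lo hi K) := by
  have hBν : ‖B‖ ≤ intervalNorm lo hi := norm_le_intervalNorm hB
  have hBK : ‖B‖ < (K : ℝ) + 2 := lt_of_le_of_lt hBν hK
  have hρ : ‖expM B - hornerP B K K‖ ≤ rho (intervalNorm lo hi) K := by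
    rw [hornerP_eq_partial]
    exact (expM_sub_partial_norm_le hBK).trans (rho_mono (norm_nonneg B) hBν hK)
  intro i j
  show expM B i j ∈ (ihornerP (ofBounds lo hi) K K) i j
      + rho (intervalNorm lo hi) K • Set.Icc (-1 : ℝ) 1
  have hsplit : expM B i j = hornerP B K K i j + (expM B - hornerP B K K) i j := by
    rw [Matrix.sub_apply]; ring
  rw [hsplit]
  apply Set.add_mem_add (mem_ihornerP hB K K i j)
  exact mem_smul_unit_Icc (rho_nonneg (intervalNorm_nonneg hlohi) hK)
    ((entry_abs_le _ i j).trans hρ)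

end Aux2


/-- Scaling and squaring enclosure theorem: if `(K+2)·2^L > ‖[A]‖` then for every
`A ∈ [A]`, `exp A` belongs to `[S]([A],L,K) := ([H]([A]/2^L, K))^(2^L)`, where the
power `2^L` is computed by `L` successive interval matrix squarings. -/
theorem scaling_squaring_interval_enclosure (n K L : ℕ)
    (Alo Ahi : Matrix (Fin n) (Fin n) ℝ)
    (hA : ∀ i j, Alo i j ≤ Ahi i j) (hK1 : 1 ≤ K)
    (hKL : intervalNorm Alo Ahi < ((K : ℝ) + 2) * 2 ^ L) :
    ∀ A : Matrix (Fin n) (Fin n) ℝ, (∀ i j, A i j ∈ Set.Icc (Alo i j) (Ahi i j)) →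
      memI (expM A)
        ((fun M => imul M M)^[L]
          (ihorner (((2 : ℝ) ^ L)⁻¹ • Alo) (((2 : ℝ) ^ L)⁻¹ • Ahi) K)) := by
  intro A hAmem
  have hc : (0:ℝ) < (2:ℝ) ^ L := by positivity
  set c : ℝ := (2:ℝ) ^ L with hcdef
  set lo' := c⁻¹ • Alo with hlo'
  set hi' := c⁻¹ • Ahi with hhi'
  have hlohi' : ∀ i j, lo' i j ≤ hi' i j := by
    intro i j
    simp only [hlo', hhi', Matrix.smul_apply, smul_eq_mul]
    exact mul_le_mul_of_nonneg_left (hA i j) (by positivity)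
  have hmemc : ∀ M : Matrix (Fin n) (Fin n) ℝ,
      (∀ i j, M i j ∈ Set.Icc (lo' i j) (hi' i j)) →
      (∀ i j, (c • M) i j ∈ Set.Icc (Alo i j) (Ahi i j)) := by
    intro M hM i j
    have h1 := (hM i j).1
    have h2 := (hM i j).2
    simp only [hlo', hhi', Matrix.smul_apply, smul_eq_mul] at h1 h2 ⊢
    constructor
    · have := mul_le_mul_of_nonneg_left h1 hc.le
      rwa [mul_inv_cancel_left₀ (ne_of_gt hc)] at this
    · have := mul_le_mul_of_nonneg_left h2 hc.le
      rwa [mul_inv_cancel_left₀ (ne_of_gt hc)] at this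
  have hνA : 0 ≤ intervalNorm Alo Ahi := intervalNorm_nonneg hA
  have hν' : intervalNorm lo' hi' ≤ c⁻¹ * intervalNorm Alo Ahi := by
    apply Real.sSup_le
    · rintro x ⟨M, hM, rfl⟩
      have h1 : ‖c • M‖ ≤ intervalNorm Alo Ahi := norm_le_intervalNorm (hmemc M hM)
      rw [norm_smul, Real.norm_eq_abs, abs_of_pos hc] at h1
      calc ‖M‖ = c⁻¹ * (c * ‖M‖) := by field_simp
        _ ≤ c⁻¹ * intervalNorm Alo Ahi :=
          mul_le_mul_of_nonneg_left h1 (by positivity)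
    · positivity
  have hν'K : intervalNorm lo' hi' < (K : ℝ) + 2 := by
    apply lt_of_le_of_lt hν'
    rw [inv_mul_lt_iff₀ hc, mul_comm]
    exact hKL
  set B := c⁻¹ • A with hBdef
  have hBmem : memI B (ofBounds lo' hi') := by
    intro i j
    simp only [ofBounds, hBdef, hlo', hhi', Matrix.smul_apply, smul_eq_mul, Set.mem_Icc]
    exact ⟨mul_le_mul_of_nonneg_left (hAmem i j).1 (by positivity),
           mul_le_mul_of_nonneg_left (hAmem i j).2 (by positivity)⟩
  have hexp : expM A = (expM B) ^ (2 ^ L) := by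
    have h1 : A = (2 ^ L : ℕ) • B := by
      rw [hBdef, ← Nat.cast_smul_eq_nsmul ℝ, smul_smul]
      have h2 : ((2 ^ L : ℕ) : ℝ) = c := by rw [hcdef]; push_cast; ring
      rw [h2, mul_inv_cancel₀ (ne_of_gt hc), one_smul]
    rw [h1, expM_eq_exp, expM_eq_exp, Matrix.exp_nsmul]
  rw [hexp]
  exact mem_iter_sq L (mem_ihorner hlohi' hBmem hν'K)
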